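/- There are no integers a, b, z satisfying (5a+2)(5a+3) = b² - 5z². -/

import Mathlib

lemma not_sq_two : ¬ IsSquare (2 : ZMod 5) := by decide
lemma not_sq_three : ¬ IsSquare (3 : ZMod 5) := by decide

lemma five_not_square (q : ℕ) [Fact q.Prime] (hq2 : q ≠ 2)
    (h : q % 5 = 2 ∨ q % 5 = 3) : ¬ IsSquare (5 : ZMod q) := by
  haveI : Fact (Nat.Prime 5) := ⟨by norm_num⟩
  intro hsq
  have h5 : ((5 : ℕ) : ZMod q) = (5 : ZMod q) := by norm_cast
  have h2 : IsSquare ((q : ℕ) : ZMod 5) :=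
    (ZMod.exists_sq_eq_prime_iff_of_mod_four_eq_one (p := 5) (q := q) (by norm_num) hq2).mpr
      (h5 ▸ hsq)
  have hq5 : ((q:ℕ) : ZMod 5) = 2 ∨ ((q:ℕ) : ZMod 5) = 3 := by
    rw [← ZMod.natCast_mod]
    rcases h with h | h <;> rw [h] <;> [left; right] <;> rfl
  rcases hq5 with h' | h' <;> rw [h'] at h2
  exacts [not_sq_two h2, not_sq_three h2]

lemma descent (p : ℕ) [Fact p.Prime] (hns : ¬ IsSquare (5 : ZMod p)) (b z : ℤ)
    (h : (p : ℤ) ∣ b ^ 2 - 5 * z ^ 2) : (p : ℤ) ∣ b ∧ (p : ℤ) ∣ z := by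
  have hz : (z : ZMod p) = 0 := by
    by_contra hz
    apply hns
    have hb2 : (b : ZMod p) ^ 2 = 5 * (z : ZMod p) ^ 2 := by
      have := (ZMod.intCast_zmod_eq_zero_iff_dvd _ p).mpr h
      push_cast at this
      linear_combination this
    have h1 : ((b : ZMod p) * (z : ZMod p)⁻¹) ^ 2 = 5 := by
      field_simp [hb2]
      linear_combination hb2
    exact ⟨(b : ZMod p) * (z : ZMod p)⁻¹, by rw [← h1]; ring⟩
  have hb : (b : ZMod p) = 0 := by
    have := (ZMod.intCast_zmod_eq_zero_iff_dvd _ p).mpr h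
    push_cast at this
    rw [hz] at this
    have h2 : (b : ZMod p) ^ 2 = 0 := by linear_combination this
    exact pow_eq_zero_iff (n := 2) (by norm_num) |>.mp h2
  exact ⟨(ZMod.intCast_zmod_eq_zero_iff_dvd _ p).mp hb,
    (ZMod.intCast_zmod_eq_zero_iff_dvd _ p).mp hz⟩

lemma key : ∀ m : ℕ, 0 < m → ¬ 2 ∣ m → ¬ 5 ∣ m →
    ∀ b z k : ℤ, (m : ℤ) * k = b ^ 2 - 5 * z ^ 2 →
    (∀ q : ℕ, q.Prime → (q % 5 = 2 ∨ q % 5 = 3) → q ∣ m → ¬ (q : ℤ) ∣ k) →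
    m % 5 = 1 ∨ m % 5 = 4 := by
  intro m
  induction m using Nat.strong_induction_on with
  | _ m IH =>
    intro hm h2 h5 b z k heq hq
    rcases eq_or_ne m 1 with rfl | hm1
    · left; rfl
    set p := m.minFac with hpdef
    have hp : p.Prime := Nat.minFac_prime hm1
    haveI : Fact p.Prime := ⟨hp⟩
    have hpm : p ∣ m := Nat.minFac_dvd m
    have hp2 : p ≠ 2 := fun h => h2 (h ▸ hpm)
    have hp5 : p ≠ 5 := fun h => h5 (h ▸ hpm)
    have hp0 : p % 5 ≠ 0 := fun h =>
      hp5 ((Nat.prime_dvd_prime_iff_eq (by norm_num) hp).mp (Nat.dvd_of_mod_eq_zero h)).symm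
    have hplt : 1 < p := hp.one_lt
    have hppos : 0 < p := hp.pos
    have hcases : p % 5 = 1 ∨ (p % 5 = 2 ∨ p % 5 = 3) ∨ p % 5 = 4 := by omega
    obtain ⟨m', hm'⟩ := hpm
    have hpm : p ∣ m := ⟨m', hm'⟩
    have hm'pos : 0 < m' := by
      rcases Nat.eq_zero_or_pos m' with h | h
      · subst h; simp at hm'; omega
      · exact h
    rcases hcases with h1 | hmid
    swap
    rcases hmid with h23 | h4
    -- Case B: p % 5 = 2 or 3
    · have hns := five_not_square p hp2 h23
      have hpdvd : (p : ℤ) ∣ b ^ 2 - 5 * z ^ 2 := by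
        rw [← heq]
        exact Dvd.dvd.mul_right (Int.natCast_dvd_natCast.mpr hpm) k
      obtain ⟨hb, hz⟩ := descent p hns b z hpdvd
      obtain ⟨b', rfl⟩ := hb
      obtain ⟨z', rfl⟩ := hz
      have hk : ¬ (p : ℤ) ∣ k := hq p hp h23 hpm
      have hpprime : Prime (p : ℤ) := Nat.prime_iff_prime_int.mp hp
      -- show p ∣ m'
      have hdvd2 : (p : ℤ) ∣ (m' : ℤ) * k := by
        have hcancel : (p : ℤ) * ((m' : ℤ) * k) =
            (p : ℤ) * ((p:ℤ) * (b' ^ 2 - 5 * z' ^ 2)) := by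
          have : (m : ℤ) = (p : ℤ) * (m' : ℤ) := by exact_mod_cast hm'
          rw [this] at heq
          linear_combination heq
        have := mul_left_cancel₀ (by exact_mod_cast hp.ne_zero : (p:ℤ) ≠ 0) hcancel
        exact ⟨b' ^ 2 - 5 * z' ^ 2, this⟩
      have hpm' : (p : ℤ) ∣ (m' : ℤ) := by
        rcases hpprime.dvd_mul.mp hdvd2 with h | h
        · exact h
        · exact absurd h hk
      obtain ⟨m'', hm''⟩ := Int.natCast_dvd_natCast.mp hpm'
      have hm2 : m = p * (p * m'') := by rw [← hm'']; exact hm'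
      have hm''pos : 0 < m'' := by
        rcases Nat.eq_zero_or_pos m'' with h | h
        · subst h; simp at hm''; omega
        · exact h
      have hlt : m'' < m := by
        calc m'' < p * m'' := by
              exact lt_mul_of_one_lt_left hm''pos hplt
          _ ≤ p * (p * m'') := by
              nlinarith
          _ = m := hm2.symm
      have heq'' : (m'' : ℤ) * k = b' ^ 2 - 5 * z' ^ 2 := by
        have hc : (m : ℤ) = (p : ℤ) * ((p : ℤ) * (m'' : ℤ)) := by exact_mod_cast hm2
        rw [hc] at heq
        have hcancel : ((p : ℤ) * (p : ℤ)) * ((m'' : ℤ) * k) =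
            ((p : ℤ) * (p : ℤ)) * (b' ^ 2 - 5 * z' ^ 2) := by linear_combination heq
        exact mul_left_cancel₀
          (mul_ne_zero (by exact_mod_cast hp.ne_zero) (by exact_mod_cast hp.ne_zero)) hcancel
      have hIH := IH m'' hlt hm''pos
        (fun h => h2 (hm2 ▸ Dvd.dvd.mul_left (Dvd.dvd.mul_left h p) p))
        (fun h => h5 (hm2 ▸ Dvd.dvd.mul_left (Dvd.dvd.mul_left h p) p))
        b' z' k heq''
        (fun q hq' hq5 hqm => hq q hq' hq5 (hm2 ▸ Dvd.dvd.mul_left (Dvd.dvd.mul_left hqm p) p))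
      have hmod : m % 5 = p % 5 * (p % 5 * (m'' % 5) % 5) % 5 := by
        rw [hm2, Nat.mul_mod, Nat.mul_mod p m'']
      rcases h23 with hA | hA <;> rcases hIH with hB | hB <;>
        rw [hA, hB] at hmod <;> omega
    -- Case A: p % 5 = 1 or 4  (two symmetric goals via h1 / h4)
    all_goals {
      have hlt : m' < m := by
        calc m' < p * m' := lt_mul_of_one_lt_left hm'pos hplt
          _ = m := hm'.symm
      have heq' : (m' : ℤ) * ((p : ℤ) * k) = b ^ 2 - 5 * z ^ 2 := by
        have hc : (m : ℤ) = (p : ℤ) * (m' : ℤ) := by exact_mod_cast hm'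
        rw [hc] at heq
        linear_combination heq
      have hIH := IH m' hlt hm'pos
        (fun h => h2 (hm' ▸ Dvd.dvd.mul_left h p))
        (fun h => h5 (hm' ▸ Dvd.dvd.mul_left h p))
        b z ((p : ℤ) * k) heq'
        (fun q hq' hq5 hqm hdvd => by
          have hqp : q ≠ p := by omega
          have hqprime : Prime (q : ℤ) := Nat.prime_iff_prime_int.mp hq'
          rcases hqprime.dvd_mul.mp hdvd with h | h
          · exact hqp (Nat.prime_dvd_prime_iff_eq hq' hp |>.mp (Int.natCast_dvd_natCast.mp h))
          · exact hq q hq' hq5 (hm' ▸ Dvd.dvd.mul_left hqm p) h)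
      have hmod : m % 5 = p % 5 * (m' % 5) % 5 := by
        rw [hm', Nat.mul_mod]
      rcases hIH with hB | hB <;>
        first
          | (rw [h1, hB] at hmod; omega)
          | (rw [h4, hB] at hmod; omega) }

lemma helper (D K b z : ℤ) (heq : D * K = b ^ 2 - 5 * z ^ 2)
    (hd : ¬ 2 ∣ D.natAbs) (h5 : D.natAbs % 5 = 2 ∨ D.natAbs % 5 = 3)
    (hcop : ∀ q : ℤ, q ∣ D → q ∣ K → IsUnit q) : False := by
  set m := D.natAbs with hmdef
  have hmpos : 0 < m := by omega
  have hm2 : ¬ 2 ∣ m := hd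
  have hm5 : ¬ 5 ∣ m := by omega
  have hqcond : ∀ K' : ℤ, (K' = K ∨ K' = -K) → ∀ q : ℕ, q.Prime →
      (q % 5 = 2 ∨ q % 5 = 3) → q ∣ m → ¬ (q : ℤ) ∣ K' := by
    intro K' hK' q hq _ hqm hdvd
    have hqD : (q : ℤ) ∣ D := by
      have : (q : ℤ) ∣ (m : ℤ) := Int.natCast_dvd_natCast.mpr hqm
      rcases Int.natAbs_eq D with h | h
      · rw [h]; exact_mod_cast this
      · rw [h]; exact dvd_neg.mpr (by exact_mod_cast this)
    have hqK : (q : ℤ) ∣ K := by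
      rcases hK' with rfl | rfl
      · exact hdvd
      · exact (dvd_neg.mp hdvd)
    have := hcop q hqD hqK
    rw [Int.isUnit_iff] at this
    rcases this with h | h <;> [skip; skip] <;>
      · have := hq.one_lt; omega
  have hres : m % 5 = 1 ∨ m % 5 = 4 := by
    rcases Int.natAbs_eq D with h | h
    · exact key m hmpos hm2 hm5 b z K (by rw [← h]; exact heq)
        (hqcond K (Or.inl rfl))
    · exact key m hmpos hm2 hm5 b z (-K)
        (by have : (m : ℤ) = -D := by omega
            rw [this]; linear_combination heq)
        (hqcond (-K) (Or.inr rfl))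
  omega

/-- There are no integers `a, b, z` satisfying `(5a+2)(5a+3) = b² - 5z²`. -/
theorem no_solution_5a2_5a3 :
    ¬ ∃ a b z : ℤ, (5 * a + 2) * (5 * a + 3) = b ^ 2 - 5 * z ^ 2 := by
  rintro ⟨a, b, z, h⟩
  rcases Int.even_or_odd a with ⟨t, rfl⟩ | ⟨t, rfl⟩
  · -- a = t + t : odd factor is 5a+3
    apply helper (5 * (t + t) + 3) (5 * (t + t) + 2) b z
      (by linear_combination h)
      (by omega) (by omega)
    intro q hq1 hq2
    exact isUnit_of_dvd_one (by have := dvd_sub hq1 hq2; simpa using this)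
  · -- a = 2t+1 : odd factor is 5a+2
    apply helper (5 * (2 * t + 1) + 2) (5 * (2 * t + 1) + 3) b z h
      (by omega) (by omega)
    intro q hq1 hq2
    exact isUnit_of_dvd_one (by have := dvd_sub hq2 hq1; simpa using this)
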